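/- The objective function f is convex on (ℝ^d)^n. -/

import Mathlib

open Finset Filter

noncomputable def obj {d n : ℕ} {J : Type*} (a : J → EuclideanSpace ℝ (Fin d))
    (A : Fin n → Finset J) (dhat : Fin n → J → ℝ)
    (B : Fin n → Finset (Fin n)) (lhat : Fin n → Fin n → ℝ)
    (x : Fin n → EuclideanSpace ℝ (Fin d)) : ℝ :=
  (∑ i, ∑ j ∈ A i, max (‖x i - a j‖ - dhat i j) 0 ^ 2)
    + (1 / 2) * ∑ i, ∑ q ∈ B i, max (‖x i - x q‖ - lhat i q) 0 ^ 2

/-- Square of a nonnegative convex function is convex. -/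
lemma convexOn_sq_of_nonneg {E : Type*} [AddCommGroup E] [Module ℝ E] {f : E → ℝ}
    (hf : ConvexOn ℝ Set.univ f) (h0 : ∀ x, 0 ≤ f x) :
    ConvexOn ℝ Set.univ (fun x => f x ^ 2) := by
  refine ⟨convex_univ, ?_⟩
  intro x _ y _ p q hp hq hpq
  have h := hf.2 (Set.mem_univ x) (Set.mem_univ y) hp hq hpq
  have h0x := h0 x
  have h0y := h0 y
  have h0z := h0 (p • x + q • y)
  simp only [smul_eq_mul] at *
  nlinarith [sq_nonneg (f x - f y), mul_nonneg hp hq, sq_nonneg (p * f x + q * f y)]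

/-- Sum version of `ConvexOn.add`. -/
lemma convexOn_finset_sum {E ι : Type*} [AddCommGroup E] [Module ℝ E] (t : Finset ι)
    {f : ι → E → ℝ} (hf : ∀ i ∈ t, ConvexOn ℝ Set.univ (f i)) :
    ConvexOn ℝ Set.univ (fun x => ∑ i ∈ t, f i x) := by
  classical
  induction t using Finset.induction with
  | empty => simpa using convexOn_const 0 convex_univ
  | @insert i s hi ih =>
    simp only [Finset.sum_insert hi]
    exact (hf _ (Finset.mem_insert_self _ _)).add
      (ih fun j hj => hf j (Finset.mem_insert_of_mem hj))

lemma convexOn_max_sub_zero {E : Type*} [AddCommGroup E] [Module ℝ E] {f : E → ℝ}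
    (hf : ConvexOn ℝ Set.univ f) (c : ℝ) :
    ConvexOn ℝ Set.univ (fun x => max (f x - c) 0) := by
  have h1 : ConvexOn ℝ Set.univ (fun x => f x - c) := by
    simpa [sub_eq_add_neg, Pi.add_def] using hf.add_const (-c)
  simpa [Pi.sup_def] using h1.sup (convexOn_const 0 convex_univ)

lemma convexOn_term {E : Type*} [AddCommGroup E] [Module ℝ E] {f : E → ℝ}
    (hf : ConvexOn ℝ Set.univ f) (c : ℝ) :
    ConvexOn ℝ Set.univ (fun x => max (f x - c) 0 ^ 2) :=
  convexOn_sq_of_nonneg (convexOn_max_sub_zero hf c) (fun _ => le_max_right _ _)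

theorem stmt0 (d n : ℕ) (hd : 1 ≤ d) (hn : 1 ≤ n) {J : Type*} [Fintype J]
    (a : J → EuclideanSpace ℝ (Fin d))
    (A : Fin n → Finset J) (dhat : Fin n → J → ℝ)
    (B : Fin n → Finset (Fin n)) (lhat : Fin n → Fin n → ℝ)
    (hdhat : ∀ i, ∀ j ∈ A i, 0 ≤ dhat i j)
    (hlhat : ∀ i, ∀ q ∈ B i, 0 ≤ lhat i q)
    (hBirr : ∀ i : Fin n, i ∉ B i)
    (hBsymm : ∀ i q : Fin n, q ∈ B i ↔ i ∈ B q)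
    (hlsymm : ∀ i q : Fin n, lhat i q = lhat q i) :
    ConvexOn ℝ Set.univ (obj a A dhat B lhat) := by
  have hnorm1 : ∀ (i : Fin n) (b : EuclideanSpace ℝ (Fin d)),
      ConvexOn ℝ Set.univ (fun x : Fin n → EuclideanSpace ℝ (Fin d) => ‖x i - b‖) := by
    intro i b
    refine ⟨convex_univ, ?_⟩
    intro x _ y _ p q hp hq hpq
    have hdecomp : (p • x + q • y) i - b = p • (x i - b) + q • (y i - b) := by
      simp only [Pi.add_apply, Pi.smul_apply, smul_sub]
      match_scalars <;> linarith
    show ‖(p • x + q • y) i - b‖ ≤ p • ‖x i - b‖ + q • ‖y i - b‖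
    rw [hdecomp]
    calc ‖p • (x i - b) + q • (y i - b)‖
        ≤ ‖p • (x i - b)‖ + ‖q • (y i - b)‖ := norm_add_le _ _
      _ = p * ‖x i - b‖ + q * ‖y i - b‖ := by
          rw [norm_smul, norm_smul, Real.norm_of_nonneg hp, Real.norm_of_nonneg hq]
      _ = p • ‖x i - b‖ + q • ‖y i - b‖ := by simp [smul_eq_mul]
  have hnorm2 : ∀ (i q : Fin n),
      ConvexOn ℝ Set.univ (fun x : Fin n → EuclideanSpace ℝ (Fin d) => ‖x i - x q‖) := by
    intro i r
    refine ⟨convex_univ, ?_⟩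
    intro x _ y _ p q hp hq hpq
    have hdecomp : (p • x + q • y) i - (p • x + q • y) r
        = p • (x i - x r) + q • (y i - y r) := by
      simp only [Pi.add_apply, Pi.smul_apply, smul_sub]
      abel
    show ‖(p • x + q • y) i - (p • x + q • y) r‖ ≤ p • ‖x i - x r‖ + q • ‖y i - y r‖
    rw [hdecomp]
    calc ‖p • (x i - x r) + q • (y i - y r)‖
        ≤ ‖p • (x i - x r)‖ + ‖q • (y i - y r)‖ := norm_add_le _ _
      _ = p * ‖x i - x r‖ + q * ‖y i - y r‖ := by
          rw [norm_smul, norm_smul, Real.norm_of_nonneg hp, Real.norm_of_nonneg hq]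
      _ = p • ‖x i - x r‖ + q • ‖y i - y r‖ := by simp [smul_eq_mul]
  have hpart1 : ConvexOn ℝ Set.univ
      (fun x : Fin n → EuclideanSpace ℝ (Fin d) =>
        ∑ i, ∑ j ∈ A i, max (‖x i - a j‖ - dhat i j) 0 ^ 2) :=
    convexOn_finset_sum _ (fun i _ => convexOn_finset_sum _
      (fun j _ => convexOn_term (hnorm1 i (a j)) (dhat i j)))
  have hpart2 : ConvexOn ℝ Set.univ
      (fun x : Fin n → EuclideanSpace ℝ (Fin d) =>
        ∑ i, ∑ q ∈ B i, max (‖x i - x q‖ - lhat i q) 0 ^ 2) :=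
    convexOn_finset_sum _ (fun i _ => convexOn_finset_sum _
      (fun q _ => convexOn_term (hnorm2 i q) (lhat i q)))
  have hpart2' := hpart2.smul (by norm_num : (0:ℝ) ≤ 1/2)
  exact hpart1.add hpart2'
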